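/- Let b > 0, β > 0 with β ≠ 1, and γ ∈ ℝ be such that λ := -γ·ln b/(β - 1) ≥ 0; let t ≥ 0, c ≥ 0, and d, b₀ ∈ ℝ; and let n ∈ ℕ. Then, with respect to the product of the Poisson distribution with mean λ on ℕ and the Gaussian measure gaussianReal b₀ t on ℝ (modeling an independent log-Poisson factor and geometric Brownian factor), the mixed n-th moment satisfies ∑_{j=0}^∞ ∫_ℝ (b^γ·β^j)^n · exp(n((d - c/2)·t + √c·x)) · (λ^j e^{-λ}/j!) d(gaussianReal b₀ t)(x) = b^{γ(n - (β^n - 1)/(β - 1))} · exp(n·d·t + n·√c·b₀ + (n(n-1)/2)·c·t). -/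

import Mathlib

open Real NNReal MeasureTheory ProbabilityTheory

lemma gaussianPDFReal_mul_exp (b₀ : ℝ) {v : ℝ≥0} (hv : v ≠ 0) (s x : ℝ) :
    gaussianPDFReal b₀ v x * Real.exp (s * x)
      = Real.exp (s * b₀ + s ^ 2 * v / 2) * gaussianPDFReal (b₀ + s * v) v x := by
  have hv' : (0 : ℝ) < (v : ℝ) := by positivity
  simp only [gaussianPDFReal]
  rw [mul_assoc, ← Real.exp_add, mul_left_comm, ← Real.exp_add]
  congr 2
  field_simp
  ring

lemma mgf_gauss (b₀ : ℝ) (t : ℝ≥0) (s : ℝ) :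
    ∫ x : ℝ, Real.exp (s * x) ∂(gaussianReal b₀ t)
      = Real.exp (s * b₀ + s ^ 2 * t / 2) := by
  by_cases ht : t = 0
  · simp [ht, integral_dirac]
  · rw [gaussianReal_of_var_ne_zero _ ht]
    have hpdf : gaussianPDF b₀ t = fun x ↦ ((Real.toNNReal (gaussianPDFReal b₀ t x) : ℝ≥0) : ENNReal) := by
      ext x; simp [gaussianPDF, ENNReal.ofReal]
    rw [hpdf, integral_withDensity_eq_integral_smul
      ((measurable_gaussianPDFReal b₀ t).real_toNNReal)]
    have : ∀ x : ℝ, (Real.toNNReal (gaussianPDFReal b₀ t x)) • Real.exp (s * x)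
        = Real.exp (s * b₀ + s ^ 2 * t / 2) * gaussianPDFReal (b₀ + s * t) t x := by
      intro x
      rw [NNReal.smul_def, smul_eq_mul, Real.coe_toNNReal _ (gaussianPDFReal_nonneg _ _ _),
        gaussianPDFReal_mul_exp b₀ ht s x]
    simp_rw [this]
    rw [integral_const_mul, integral_gaussianPDFReal_eq_one _ ht, mul_one]

/-- Mixed `n`-th moment of an independent log-Poisson factor `b^γ·β^N`
(`N` Poisson of mean `λ = -γ·ln b/(β-1) ≥ 0`) and geometric Brownian factor
`exp((d - c/2)t + √c·b_t)` (`b_t` Gaussian of mean `b₀` and variance `t`). -/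
theorem logPoisson_geometric_brownian_mixed_moment (b β γ : ℝ) (hb : 0 < b)
    (hβ : 0 < β) (hβ1 : β ≠ 1) (lam : ℝ) (hlam : lam = -γ * Real.log b / (β - 1))
    (hlam0 : 0 ≤ lam) (t : ℝ≥0) (c : ℝ) (hc : 0 ≤ c) (d b₀ : ℝ) (n : ℕ) :
    ∑' j : ℕ, ∫ x : ℝ,
        (b ^ γ * β ^ j) ^ n * Real.exp ((n : ℝ) * ((d - c / 2) * (t : ℝ) + Real.sqrt c * x)) *
          (lam ^ j * Real.exp (-lam) / (Nat.factorial j : ℝ)) ∂(gaussianReal b₀ t)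
      = b ^ (γ * ((n : ℝ) - (β ^ n - 1) / (β - 1))) *
          Real.exp ((n : ℝ) * d * (t : ℝ) + (n : ℝ) * Real.sqrt c * b₀ +
            ((n : ℝ) * ((n : ℝ) - 1) / 2) * c * (t : ℝ)) := by
  set s : ℝ := (n : ℝ) * Real.sqrt c with hs
  set A : ℝ := (b ^ γ) ^ n * Real.exp (-lam) *
      Real.exp ((n : ℝ) * ((d - c / 2) * (t : ℝ)) + (s * b₀ + s ^ 2 * (t : ℝ) / 2)) with hA
  have key : ∀ j : ℕ, (∫ x : ℝ,
        (b ^ γ * β ^ j) ^ n * Real.exp ((n : ℝ) * ((d - c / 2) * (t : ℝ) + Real.sqrt c * x)) *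
          (lam ^ j * Real.exp (-lam) / (Nat.factorial j : ℝ)) ∂(gaussianReal b₀ t))
      = A * ((β ^ n * lam) ^ j / (Nat.factorial j : ℝ)) := by
    intro j
    have h1 : (fun x : ℝ => (b ^ γ * β ^ j) ^ n *
          Real.exp ((n : ℝ) * ((d - c / 2) * (t : ℝ) + Real.sqrt c * x)) *
          (lam ^ j * Real.exp (-lam) / (Nat.factorial j : ℝ)))
        = fun x : ℝ => ((b ^ γ * β ^ j) ^ n *
            (lam ^ j * Real.exp (-lam) / (Nat.factorial j : ℝ)) *
            Real.exp ((n : ℝ) * ((d - c / 2) * (t : ℝ)))) * Real.exp (s * x) := by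
      funext x
      rw [mul_assoc _ _ (Real.exp (s * x)), ← Real.exp_add]
      ring_nf
      rw [hs]
      ring
    rw [h1, integral_const_mul, mgf_gauss, hA, Real.exp_add, mul_pow (b ^ γ),
      mul_pow (β ^ n) lam j, ← pow_mul β j n, mul_comm j n, pow_mul β n j]
    ring_nf
    simp only [mul_assoc, ← Real.exp_add]
    ring_nf
  rw [tsum_congr key, _root_.tsum_mul_left]
  have hexp : ∑' j : ℕ, (β ^ n * lam) ^ j / (Nat.factorial j : ℝ) = Real.exp (β ^ n * lam) := by
    rw [Real.exp_eq_exp_ℝ, NormedSpace.exp_eq_tsum_div]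
  rw [hexp, hA]
  have hbg : (b ^ γ) ^ n = Real.exp (Real.log b * (γ * n)) := by
    rw [← Real.rpow_natCast (b ^ γ) n, ← Real.rpow_mul hb.le, Real.rpow_def_of_pos hb]
  have hrhs : b ^ (γ * ((n : ℝ) - (β ^ n - 1) / (β - 1)))
      = Real.exp (Real.log b * (γ * ((n : ℝ) - (β ^ n - 1) / (β - 1)))) :=
    Real.rpow_def_of_pos hb _
  rw [hbg, hrhs, ← Real.exp_add, ← Real.exp_add, ← Real.exp_add, ← Real.exp_add,
    Real.exp_eq_exp]
  have hβ1' : β - 1 ≠ 0 := sub_ne_zero.mpr hβ1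
  have hcs : Real.sqrt c ^ 2 = c := Real.sq_sqrt hc
  rw [hs, mul_pow, hcs, hlam]
  field_simp
  ring
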